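/- Let M be an n×n complex matrix all of whose eigenvalues λ satisfy |1 + λ| < 1, and let ω̄(0), ω̄(1), … ∈ [0,1] be a sequence with ∑_{s=0}^∞ ω̄(s) = ∞. Then the ordered matrix product (I + ω̄(t)M)·(I + ω̄(t−1)M)···(I + ω̄(0)M) converges to the zero matrix as t → ∞. -/

import Mathlib

open Matrix Filter Topology
open Polynomial
open scoped NNReal ENNReal

section SpecAux
variable {n : ℕ}

lemma charpoly_eval_eq (M : Matrix (Fin n) (Fin n) ℂ) (μ : ℂ) :
    M.charpoly.eval μ = (μ • (1 : Matrix (Fin n) (Fin n) ℂ) - M).det := by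
  rw [Matrix.charpoly, ← Polynomial.coe_evalRingHom, RingHom.map_det]
  congr 1
  ext i j
  by_cases h : i = j
  · subst h
    simp [Matrix.charmatrix_apply_eq, Matrix.one_apply, Matrix.sub_apply]
  · simp [Matrix.charmatrix_apply_ne _ _ _ h, Matrix.one_apply_ne h, Matrix.sub_apply]

lemma isRoot_of_mem_spectrum (M : Matrix (Fin n) (Fin n) ℂ) (μ : ℂ)
    (h : μ ∈ spectrum ℂ M) : M.charpoly.IsRoot μ := by
  rw [spectrum.mem_iff] at h
  rw [Polynomial.IsRoot, charpoly_eval_eq]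
  by_contra hdet
  exact h ((Matrix.isUnit_iff_isUnit_det _).2 (isUnit_iff_ne_zero.2 (by
    rwa [Algebra.algebraMap_eq_smul_one] )))

lemma mem_spectrum_shift (M : Matrix (Fin n) (Fin n) ℂ) (μ : ℂ)
    (h : μ ∈ spectrum ℂ (1 + M)) : (μ - 1) ∈ spectrum ℂ M := by
  rw [spectrum.mem_iff] at h ⊢
  have : algebraMap ℂ (Matrix (Fin n) (Fin n) ℂ) (μ - 1) - M
      = algebraMap ℂ (Matrix (Fin n) (Fin n) ℂ) μ - (1 + M) := by
    rw [map_sub, _root_.map_one]; abel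
  rwa [this]

end SpecAux

section NormAux
attribute [local instance] Matrix.linftyOpNormedRing Matrix.linftyOpNormedAlgebra

variable {n : ℕ}

lemma entry_norm_le (X : Matrix (Fin n) (Fin n) ℂ) (i j : Fin n) : ‖X i j‖ ≤ ‖X‖ := by
  have h : ‖X i j‖₊ ≤ ‖X‖₊ := by
    rw [Matrix.linfty_opNNNorm_def]
    exact le_trans (Finset.single_le_sum (f := fun j' => ‖X i j'‖₊) (fun _ _ => zero_le) (Finset.mem_univ j))
      (Finset.le_sup (f := fun i => ∑ j, ‖X i j‖₊) (Finset.mem_univ i))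
  exact_mod_cast h

lemma norm_P_tendsto (n : ℕ) (hn : 0 < n) (M : Matrix (Fin n) (Fin n) ℂ)
    (heig : ∀ lam : ℂ, M.charpoly.IsRoot lam → ‖1 + lam‖ < 1)
    (w : ℕ → ℝ) (hw : ∀ s, w s ∈ Set.Icc (0 : ℝ) 1)
    (hdiv : Tendsto (fun T => ∑ s ∈ Finset.range T, w s) atTop atTop)
    (P : ℕ → Matrix (Fin n) (Fin n) ℂ)
    (hP0 : P 0 = 1 + (w 0 : ℂ) • M)
    (hPrec : ∀ t, P (t + 1) = (1 + (w (t + 1) : ℂ) • M) * P t) :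
    Tendsto (fun t => ‖P t‖) atTop (𝓝 0) := by
  haveI : Nonempty (Fin n) := ⟨⟨0, hn⟩⟩
  haveI : CompleteSpace (Matrix (Fin n) (Fin n) ℂ) := FiniteDimensional.complete ℂ _
  set A : Matrix (Fin n) (Fin n) ℂ := 1 + M with hA
  -- spectral radius of A is < 1
  have hspec : ∀ μ ∈ spectrum ℂ A, ‖μ‖₊ < 1 := by
    intro μ hμ
    have h1 := heig _ (isRoot_of_mem_spectrum M _ (mem_spectrum_shift M μ hμ))
    have h2 : ‖μ‖ < 1 := by simpa using h1
    exact_mod_cast h2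
  have hrad : spectralRadius ℂ A < (1 : ℝ≥0) := spectrum.spectralRadius_lt_of_forall_lt A hspec
  obtain ⟨σ, hσ1, hσ2⟩ := ENNReal.lt_iff_exists_nnreal_btwn.1 hrad
  have hσpos : 0 < σ := by
    rcases eq_or_lt_of_le (zero_le : 0 ≤ σ) with h | h
    · exfalso; rw [← h] at hσ1; simp at hσ1
    · exact h
  have hgel := spectrum.pow_nnnorm_pow_one_div_tendsto_nhds_spectralRadius A
  have hev : ∀ᶠ k : ℕ in atTop, (‖A ^ k‖₊ : ℝ≥0∞) ^ (1 / (k : ℝ)) < (σ : ℝ≥0∞) :=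
    hgel.eventually_lt_const hσ1
  obtain ⟨K, hK⟩ := eventually_atTop.1 hev
  set k := max K 1 with hkdef
  have hk1 : 1 ≤ k := le_max_right _ _
  set ρ : ℝ := (σ : ℝ) with hρ
  have hρpos : 0 < ρ := hσpos
  have hρlt : ρ < 1 := by exact_mod_cast hσ2
  have hAk : ‖A ^ k‖ ≤ ρ ^ k := by
    have hk0 : (k : ℝ) ≠ 0 := by positivity
    have h1 := ENNReal.rpow_le_rpow (hK k (le_max_left _ _)).le
      (by positivity : (0:ℝ) ≤ (k:ℝ))
    rw [← ENNReal.rpow_mul, one_div, inv_mul_cancel₀ hk0, ENNReal.rpow_one,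
      ENNReal.rpow_natCast] at h1
    have h2 : ‖A ^ k‖₊ ≤ σ ^ k := by exact_mod_cast h1
    exact_mod_cast h2
  -- the adapted norm
  set N : Matrix (Fin n) (Fin n) ℂ → ℝ :=
    fun X => ∑ j ∈ Finset.range k, (ρ ^ j)⁻¹ * ‖A ^ j * X‖ with hN
  have hNnonneg : ∀ X, 0 ≤ N X := by
    intro X; apply Finset.sum_nonneg; intro j _; positivity
  have hNge : ∀ X, ‖X‖ ≤ N X := by
    intro X
    have h0 : (0 : ℕ) ∈ Finset.range k := by simp [hk1]; omega
    have := Finset.single_le_sum (f := fun j => (ρ ^ j)⁻¹ * ‖A ^ j * X‖)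
      (fun j _ => by positivity) h0
    simpa using this
  -- the key contraction estimate
  have key : ∀ (X : Matrix (Fin n) (Fin n) ℂ) (ω : ℝ), 0 ≤ ω → ω ≤ 1 →
      N ((1 + (ω : ℂ) • M) * X) ≤ (1 - ω * (1 - ρ)) * N X := by
    intro X ω hω0 hω1
    have hsplit : (1 + (ω : ℂ) • M) * X = ((1 - ω : ℝ) : ℂ) • X + (ω : ℂ) • (A * X) := by
      have hAX : A * X = X + M * X := by rw [hA, add_mul, one_mul]
      rw [hAX, add_mul, one_mul, smul_mul_assoc]
      push_cast
      module
    have hterm : ∀ j, ‖A ^ j * ((1 + (ω : ℂ) • M) * X)‖ ≤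
        (1 - ω) * ‖A ^ j * X‖ + ω * ‖A ^ (j + 1) * X‖ := by
      intro j
      rw [hsplit, mul_add, mul_smul_comm, mul_smul_comm, ← mul_assoc, ← pow_succ]
      refine (norm_add_le _ _).trans ?_
      rw [norm_smul, norm_smul]
      have e1 : ‖((1 - ω : ℝ) : ℂ)‖ = 1 - ω := by
        rw [Complex.norm_real]; exact abs_of_nonneg (by linarith)
      have e2 : ‖((ω : ℝ) : ℂ)‖ = ω := by
        rw [Complex.norm_real]; exact abs_of_nonneg hω0
      rw [e1, e2]
    have hshift : ∑ j ∈ Finset.range k, (ρ ^ j)⁻¹ * ‖A ^ (j + 1) * X‖ ≤ ρ * N X := by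
      set g : ℕ → ℝ := fun j => (ρ ^ j)⁻¹ * ‖A ^ j * X‖ with hg
      have e1 : ∑ j ∈ Finset.range (k + 1), g j = (∑ j ∈ Finset.range k, g (j + 1)) + g 0 :=
        Finset.sum_range_succ' g k
      have e2 : ∑ j ∈ Finset.range (k + 1), g j = N X + g k := Finset.sum_range_succ g k
      have hg0 : g 0 = ‖X‖ := by simp [hg]
      have hgk : g k ≤ ‖X‖ := by
        have h1 : ‖A ^ k * X‖ ≤ ‖A ^ k‖ * ‖X‖ := Matrix.linfty_opNorm_mul _ _
        have h2 : ‖A ^ k‖ * ‖X‖ ≤ ρ ^ k * ‖X‖ :=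
          mul_le_mul_of_nonneg_right hAk (norm_nonneg _)
        have h3 : (ρ ^ k)⁻¹ * ‖A ^ k * X‖ ≤ (ρ ^ k)⁻¹ * (ρ ^ k * ‖X‖) := by
          apply mul_le_mul_of_nonneg_left (h1.trans h2) (by positivity)
        calc g k ≤ (ρ ^ k)⁻¹ * (ρ ^ k * ‖X‖) := h3
          _ = ‖X‖ := by field_simp
      have e3 : ∑ j ∈ Finset.range k, (ρ ^ j)⁻¹ * ‖A ^ (j + 1) * X‖
          = ρ * ∑ j ∈ Finset.range k, g (j + 1) := by
        rw [Finset.mul_sum]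
        apply Finset.sum_congr rfl
        intro j _
        rw [hg]
        have : (ρ ^ j)⁻¹ = ρ * (ρ ^ (j + 1))⁻¹ := by
          rw [pow_succ]
          field_simp
        rw [this]; ring
      rw [e3]
      have h4 : ∑ j ∈ Finset.range k, g (j + 1) ≤ N X := by
        have : ∑ j ∈ Finset.range k, g (j + 1) = N X + g k - g 0 := by
          linarith [e1, e2]
        rw [this, hg0]
        linarith
      exact mul_le_mul_of_nonneg_left h4 (le_of_lt hρpos)
    calc N ((1 + (ω : ℂ) • M) * X)
        ≤ ∑ j ∈ Finset.range k, (ρ ^ j)⁻¹ *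
            ((1 - ω) * ‖A ^ j * X‖ + ω * ‖A ^ (j + 1) * X‖) := by
          rw [hN]
          apply Finset.sum_le_sum
          intro j _
          exact mul_le_mul_of_nonneg_left (hterm j) (by positivity)
      _ = (1 - ω) * N X + ω * ∑ j ∈ Finset.range k, (ρ ^ j)⁻¹ * ‖A ^ (j + 1) * X‖ := by
          rw [hN, Finset.mul_sum, Finset.mul_sum, ← Finset.sum_add_distrib]
          apply Finset.sum_congr rfl
          intro j _; ring
      _ ≤ (1 - ω) * N X + ω * (ρ * N X) := by
          have := mul_le_mul_of_nonneg_left hshift hω0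
          linarith
      _ = (1 - ω * (1 - ρ)) * N X := by ring
  -- inductive bound
  have hind : ∀ t, N (P t) ≤ (∏ s ∈ Finset.range (t + 1), (1 - w s * (1 - ρ))) * N 1 := by
    intro t
    induction t with
    | zero =>
      have := key 1 (w 0) (hw 0).1 (hw 0).2
      rw [mul_one] at this
      rw [hP0]
      simpa [Finset.prod_range_one] using this
    | succ t ih =>
      have hkey := key (P t) (w (t + 1)) (hw (t + 1)).1 (hw (t + 1)).2
      have hc : 0 ≤ 1 - w (t + 1) * (1 - ρ) := by
        have h1 : w (t + 1) * (1 - ρ) ≤ 1 * (1 - ρ) :=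
          mul_le_mul_of_nonneg_right (hw (t + 1)).2 (by linarith)
        linarith
      rw [hPrec t]
      calc N ((1 + (w (t + 1) : ℂ) • M) * P t)
          ≤ (1 - w (t + 1) * (1 - ρ)) * N (P t) := hkey
        _ ≤ (1 - w (t + 1) * (1 - ρ)) *
            ((∏ s ∈ Finset.range (t + 1), (1 - w s * (1 - ρ))) * N 1) :=
            mul_le_mul_of_nonneg_left ih hc
        _ = (∏ s ∈ Finset.range (t + 1 + 1), (1 - w s * (1 - ρ))) * N 1 := by
            rw [Finset.prod_range_succ _ (t+1)]; ring
  -- exponential bound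
  have hbound : ∀ t, ‖P t‖ ≤ N 1 * Real.exp (-((1 - ρ) * ∑ s ∈ Finset.range (t + 1), w s)) := by
    intro t
    have hprod : (∏ s ∈ Finset.range (t + 1), (1 - w s * (1 - ρ)))
        ≤ Real.exp (-((1 - ρ) * ∑ s ∈ Finset.range (t + 1), w s)) := by
      have : Real.exp (-((1 - ρ) * ∑ s ∈ Finset.range (t + 1), w s))
          = ∏ s ∈ Finset.range (t + 1), Real.exp (-(w s * (1 - ρ))) := by
        rw [← Real.exp_sum]
        congr 1
        rw [Finset.mul_sum, ← Finset.sum_neg_distrib]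
        apply Finset.sum_congr rfl
        intro s _; ring
      rw [this]
      apply Finset.prod_le_prod
      · intro s _
        have h1 : w s * (1 - ρ) ≤ 1 * (1 - ρ) :=
          mul_le_mul_of_nonneg_right (hw s).2 (by linarith)
        linarith
      · intro s _
        have := Real.add_one_le_exp (-(w s * (1 - ρ)))
        linarith
    calc ‖P t‖ ≤ N (P t) := hNge _
      _ ≤ (∏ s ∈ Finset.range (t + 1), (1 - w s * (1 - ρ))) * N 1 := hind t
      _ ≤ Real.exp (-((1 - ρ) * ∑ s ∈ Finset.range (t + 1), w s)) * N 1 :=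
          mul_le_mul_of_nonneg_right hprod (hNnonneg 1)
      _ = N 1 * Real.exp (-((1 - ρ) * ∑ s ∈ Finset.range (t + 1), w s)) := by ring
  -- conclude
  have hS : Tendsto (fun t => ∑ s ∈ Finset.range (t + 1), w s) atTop atTop :=
    hdiv.comp (tendsto_add_atTop_nat 1)
  have hc : (0 : ℝ) < 1 - ρ := by linarith
  have hB : Tendsto (fun t => -((1 - ρ) * ∑ s ∈ Finset.range (t + 1), w s)) atTop atBot := by
    rw [tendsto_neg_atBot_iff]
    exact hS.const_mul_atTop hc
  have hexp : Tendsto (fun t => Real.exp (-((1 - ρ) * ∑ s ∈ Finset.range (t + 1), w s)))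
      atTop (𝓝 0) := Real.tendsto_exp_atBot.comp hB
  have hfinal : Tendsto (fun t => N 1 * Real.exp
      (-((1 - ρ) * ∑ s ∈ Finset.range (t + 1), w s))) atTop (𝓝 0) := by
    simpa using hexp.const_mul (N 1)
  exact squeeze_zero (fun t => norm_nonneg _) hbound hfinal

end NormAux

section NormAux2
attribute [local instance] Matrix.linftyOpNormedRing Matrix.linftyOpNormedAlgebra

lemma abs_entry_tendsto (n : ℕ) (hn : 0 < n) (M : Matrix (Fin n) (Fin n) ℂ)
    (heig : ∀ lam : ℂ, M.charpoly.IsRoot lam → ‖1 + lam‖ < 1)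
    (w : ℕ → ℝ) (hw : ∀ s, w s ∈ Set.Icc (0 : ℝ) 1)
    (hdiv : Tendsto (fun T => ∑ s ∈ Finset.range T, w s) atTop atTop)
    (P : ℕ → Matrix (Fin n) (Fin n) ℂ)
    (hP0 : P 0 = 1 + (w 0 : ℂ) • M)
    (hPrec : ∀ t, P (t + 1) = (1 + (w (t + 1) : ℂ) • M) * P t)
    (i j : Fin n) :
    Tendsto (fun t => ‖P t i j‖) atTop (𝓝 0) := by
  have hmain := norm_P_tendsto n hn M heig w hw hdiv P hP0 hPrec
  refine squeeze_zero (fun t => norm_nonneg _) (fun t => ?_) hmain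
  exact entry_norm_le (P t) i j

end NormAux2

/-- If all eigenvalues `λ` of `M` satisfy `|1 + λ| < 1` and
`∑ₛ ω̄(s) = ∞` with `ω̄(s) ∈ [0,1]`, then the products
`(I + ω̄(t)M)⋯(I + ω̄(0)M)` tend to the zero matrix. -/
theorem matrix_product_tendsto_zero
    (n : ℕ) (M : Matrix (Fin n) (Fin n) ℂ)
    (heig : ∀ lam : ℂ, M.charpoly.IsRoot lam → ‖1 + lam‖ < 1)
    (w : ℕ → ℝ) (hw : ∀ s, w s ∈ Set.Icc (0 : ℝ) 1)
    (hdiv : Tendsto (fun T => ∑ s ∈ Finset.range T, w s) atTop atTop)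
    (P : ℕ → Matrix (Fin n) (Fin n) ℂ)
    (hP0 : P 0 = 1 + (w 0 : ℂ) • M)
    (hPrec : ∀ t, P (t + 1) = (1 + (w (t + 1) : ℂ) • M) * P t) :
    Tendsto P atTop (𝓝 0) := by
  rcases Nat.eq_zero_or_pos n with hn | hn
  · subst hn
    have hP : P = fun _ => 0 := funext fun t => Subsingleton.elim _ _
    rw [hP]
    exact tendsto_const_nhds
  · apply tendsto_pi_nhds.2
    intro i
    apply tendsto_pi_nhds.2
    intro j
    have h := abs_entry_tendsto n hn M heig w hw hdiv P hP0 hPrec i j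
    show Tendsto (fun t => P t i j) atTop (𝓝 ((0 : Matrix (Fin n) (Fin n) ℂ) i j))
    rw [show (0 : Matrix (Fin n) (Fin n) ℂ) i j = 0 from rfl]
    exact tendsto_zero_iff_norm_tendsto_zero.2 (by simpa using h)
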